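/- Let A and B be trace class self-adjoint operators on a separable Hilbert space with 0 ≤ A ≤ 1 and 0 ≤ B ≤ 1 − ε for some ε ∈ (0,1). Then Tr[A(log A − log B)] ≥ C_ε Tr[(A − B)²] + Tr(A − B), where C_ε = g(1 − ε) with g(y) = (y − 1 − log y)/(y − 1)² and the convention 0 log 0 = 0. -/

import Mathlib

/-- The function `g(y) = (y - 1 - log y)/(y - 1)²`, extended by continuity to `g(1) = 1/2`. -/
noncomputable def g (y : ℝ) : ℝ := if y = 1 then 1/2 else (y - 1 - Real.log y) / (y - 1)^2

lemma aux_pos (x y : ℝ) (hx : 0 < x) (hy : 0 < y) :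
    ∀ s ∈ Set.uIcc (0:ℝ) 1, 0 < y + s * (x - y) := by
  rw [Set.uIcc_of_le (by norm_num : (0:ℝ) ≤ 1)]
  intro s hs
  nlinarith [mul_nonneg hs.1 hx.le, mul_nonneg (sub_nonneg.2 hs.2) hy.le]

lemma aux_intble (x y : ℝ) (hx : 0 < x) (hy : 0 < y) :
    IntervalIntegrable (fun s => (x - y)^2 * (1 - s) / (y + s * (x - y)))
      MeasureTheory.volume 0 1 := by
  apply ContinuousOn.intervalIntegrable
  apply ContinuousOn.div
  · fun_prop
  · fun_prop
  · intro s hs; exact (aux_pos x y hx hy s hs).ne'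

lemma aux_repr (x y : ℝ) (hx : 0 < x) (hy : 0 < y) :
    ∫ s in (0:ℝ)..1, (x - y)^2 * (1 - s) / (y + s * (x - y))
      = x * Real.log x - x * Real.log y - (x - y) := by
  have hD := aux_pos x y hx hy
  have hderiv : ∀ s ∈ Set.uIcc (0:ℝ) 1,
      HasDerivAt (fun s => x * Real.log (y + s * (x - y)) - (x - y) * s)
        ((x - y)^2 * (1 - s) / (y + s * (x - y))) s := by
    intro s hs
    have h1 : HasDerivAt (fun s : ℝ => y + s * (x - y)) (x - y) s := by
      simpa using ((hasDerivAt_id s).mul_const (x - y)).const_add y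
    have h2 := (h1.log (hD s hs).ne').const_mul x
    have h3 := h2.sub ((hasDerivAt_id s).const_mul (x - y))
    have hne := (hD s hs).ne'
    have h4 : HasDerivAt (fun s => x * Real.log (y + s * (x - y)) - (x - y) * s)
        (x * ((x - y) / (y + s * (x - y))) - (x - y) * 1) s := h3
    convert h4 using 1
    rw [eq_sub_iff_add_eq, mul_div_assoc', div_add' _ _ _ hne, div_left_inj' hne]
    ring
  rw [intervalIntegral.integral_eq_sub_of_hasDerivAt hderiv (aux_intble x y hx hy)]
  have h : y + 1 * (x - y) = x := by ring
  simp only [h, one_mul, zero_mul, mul_zero, sub_zero]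
  ring

lemma key (Y x y : ℝ) (hY0 : 0 < Y) (hY1 : Y < 1) (hx0 : 0 ≤ x) (hx1 : x ≤ 1)
    (hy0 : 0 < y) (hyY : y ≤ Y) :
    g Y * (x - y)^2 + (x - y) ≤ x * (Real.log x - Real.log y) := by
  have hgdef : g Y = (Y - 1 - Real.log Y) / (Y - 1)^2 := if_neg hY1.ne
  have hY1sq : (0:ℝ) < (Y - 1)^2 := by
    have h : Y - 1 ≠ 0 := by linarith
    positivity
  have hlog1 : Real.log Y ≤ Y - 1 := Real.log_le_sub_one_of_pos hY0
  have hlog2 : -(Y * Real.log Y) ≤ 1 - Y := by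
    have h := Real.log_le_sub_one_of_pos (inv_pos.2 hY0)
    rw [Real.log_inv] at h
    nlinarith [mul_le_mul_of_nonneg_left h hY0.le, mul_inv_cancel₀ hY0.ne']
  have hgY0 : 0 ≤ g Y := by
    rw [hgdef]
    apply div_nonneg _ hY1sq.le
    linarith
  rcases eq_or_lt_of_le hx0 with hx | hx
  · -- x = 0
    subst hx
    have h1 : g Y * y ≤ g Y * Y := mul_le_mul_of_nonneg_left hyY hgY0
    have h2 : g Y * Y ≤ 1 := by
      rw [hgdef, div_mul_eq_mul_div, div_le_one hY1sq]
      nlinarith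
    have h3 : g Y * y ≤ 1 := h1.trans h2
    rw [zero_mul]
    nlinarith [mul_le_mul_of_nonneg_right h3 hy0.le]
  · -- 0 < x
    have e1 := aux_repr x y hx hy0
    have e2 := aux_repr 1 Y one_pos hY0
    set c := (x - y)^2 / (1 - Y)^2 with hc
    have hYne : (1 - Y) ≠ 0 := by intro h; apply hY1.ne; linarith
    have e3 : ∫ s in (0:ℝ)..1, (x - y)^2 * (1 - s) / (Y + s * (1 - Y))
        = c * (1 * Real.log 1 - 1 * Real.log Y - (1 - Y)) := by
      rw [← e2, ← intervalIntegral.integral_const_mul]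
      congr 1
      funext s
      rw [mul_div_assoc']
      congr 1
      rw [hc]
      field_simp
    have hint2 : IntervalIntegrable (fun s => (x - y)^2 * (1 - s) / (Y + s * (1 - Y)))
        MeasureTheory.volume 0 1 := by
      apply ContinuousOn.intervalIntegrable
      apply ContinuousOn.div
      · fun_prop
      · fun_prop
      · intro s hs; exact (aux_pos 1 Y one_pos hY0 s hs).ne'
    have hle : ∀ s ∈ Set.Icc (0:ℝ) 1, (x - y)^2 * (1 - s) / (Y + s * (1 - Y))
        ≤ (x - y)^2 * (1 - s) / (y + s * (x - y)) := by
      intro s hs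
      have hd1 : 0 < y + s * (x - y) := by
        apply aux_pos x y hx hy0
        rw [Set.uIcc_of_le (by norm_num : (0:ℝ) ≤ 1)]; exact hs
      have hd2 : y + s * (x - y) ≤ Y + s * (1 - Y) := by nlinarith [hs.1, hs.2]
      have hnum : 0 ≤ (x - y)^2 * (1 - s) := by nlinarith [hs.2, sq_nonneg (x - y)]
      gcongr
    have mono := intervalIntegral.integral_mono_on (by norm_num : (0:ℝ) ≤ 1) hint2 (aux_intble x y hx hy0) hle
    rw [e1, e3] at mono
    have hgmul : g Y * (x - y)^2 = c * (1 * Real.log 1 - 1 * Real.log Y - (1 - Y)) := by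
      rw [hgdef, hc, Real.log_one]
      have : (1 - Y)^2 = (Y - 1)^2 := by ring
      rw [this]
      field_simp
      ring
    rw [mul_sub]
    linarith

/-- Relative entropy inequality (Klein's inequality form).  The trace-class self-adjoint
operators `A`, `B` on a separable Hilbert space are represented through their spectral
decompositions: `A = ∑ᵢ aᵢ |uᵢ⟩⟨uᵢ|`, `B = ∑ⱼ bⱼ |vⱼ⟩⟨vⱼ|` with orthonormal bases `u`, `v`
and summable (trace-class) eigenvalue sequences `a`, `b`, with `0 ≤ A ≤ 1`,
`0 ≤ B ≤ 1 - ε`.  Then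
`Tr[A (log A - log B)] ≥ g(1-ε) Tr[(A-B)²] + Tr(A-B)`,
all traces being computed via the joint spectral decomposition. -/
theorem stmt2 {H : Type*} [NormedAddCommGroup H] [InnerProductSpace ℂ H] [CompleteSpace H]
    (u v : ℕ → H) (hu : Orthonormal ℂ u) (hv : Orthonormal ℂ v)
    (hu_total : (Submodule.span ℂ (Set.range u)).topologicalClosure = ⊤)
    (hv_total : (Submodule.span ℂ (Set.range v)).topologicalClosure = ⊤)
    (a b : ℕ → ℝ) (ε : ℝ) (hε : ε ∈ Set.Ioo (0:ℝ) 1)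
    (ha : ∀ i, a i ∈ Set.Icc (0:ℝ) 1) (hb : ∀ j, b j ∈ Set.Ioc (0:ℝ) (1 - ε))
    (haS : Summable a) (hbS : Summable b)
    (hS1 : Summable (fun p : ℕ × ℕ =>
      ‖(inner ℂ (u p.1) (v p.2) : ℂ)‖^2 * (a p.1 * (Real.log (a p.1) - Real.log (b p.2)))))
    (hS2 : Summable (fun p : ℕ × ℕ =>
      ‖(inner ℂ (u p.1) (v p.2) : ℂ)‖^2 * (a p.1 - b p.2)^2))
    (hS3 : Summable (fun p : ℕ × ℕ =>
      ‖(inner ℂ (u p.1) (v p.2) : ℂ)‖^2 * (a p.1 - b p.2))) :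
    ∑' p : ℕ × ℕ, ‖(inner ℂ (u p.1) (v p.2) : ℂ)‖^2 * (a p.1 * (Real.log (a p.1) - Real.log (b p.2)))
      ≥ g (1 - ε) * ∑' p : ℕ × ℕ, ‖(inner ℂ (u p.1) (v p.2) : ℂ)‖^2 * (a p.1 - b p.2)^2
        + ∑' p : ℕ × ℕ, ‖(inner ℂ (u p.1) (v p.2) : ℂ)‖^2 * (a p.1 - b p.2) := by
  have hkey : ∀ p : ℕ × ℕ,
      g (1 - ε) * (‖(inner ℂ (u p.1) (v p.2) : ℂ)‖^2 * (a p.1 - b p.2)^2)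
        + ‖(inner ℂ (u p.1) (v p.2) : ℂ)‖^2 * (a p.1 - b p.2)
      ≤ ‖(inner ℂ (u p.1) (v p.2) : ℂ)‖^2 * (a p.1 * (Real.log (a p.1) - Real.log (b p.2))) := by
    intro p
    have hw : (0:ℝ) ≤ ‖(inner ℂ (u p.1) (v p.2) : ℂ)‖^2 := by positivity
    have h := key (1 - ε) (a p.1) (b p.2) (by linarith [hε.2]) (by linarith [hε.1])
      (ha p.1).1 (ha p.1).2 (hb p.2).1 (hb p.2).2
    calc g (1 - ε) * (‖(inner ℂ (u p.1) (v p.2) : ℂ)‖^2 * (a p.1 - b p.2)^2)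
          + ‖(inner ℂ (u p.1) (v p.2) : ℂ)‖^2 * (a p.1 - b p.2)
        = ‖(inner ℂ (u p.1) (v p.2) : ℂ)‖^2
            * (g (1 - ε) * (a p.1 - b p.2)^2 + (a p.1 - b p.2)) := by ring
      _ ≤ _ := mul_le_mul_of_nonneg_left h hw
  have hsum2 : Summable (fun p : ℕ × ℕ =>
      g (1 - ε) * (‖(inner ℂ (u p.1) (v p.2) : ℂ)‖^2 * (a p.1 - b p.2)^2)) :=
    hS2.mul_left _
  have h := Summable.tsum_le_tsum hkey (hsum2.add hS3) hS1
  rwa [Summable.tsum_add hsum2 hS3, tsum_mul_left] at h
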